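/- Let p ≥ 3 and d > p. If p is even and s ≥ 3p + 1, or p is odd and s ≥ 3p + 2, then the complement of the cycle C_s is not the intersection graph of any family of axis-parallel p-dimensional boxes (p-boxes) in ℝ^d. -/
import Mathlib


open Set

/-- An axis-parallel box in `ℝ^d`: a product of nonempty closed intervals. -/
def IsBoxIn (d : ℕ) (s : Set (Fin d → ℝ)) : Prop :=
  ∃ lo hi : Fin d → ℝ, (∀ i, lo i ≤ hi i) ∧
    s = {x | ∀ i, x i ∈ Set.Icc (lo i) (hi i)}

/-- A `p`-box in `ℝ^d`: a product of nonempty closed intervals, exactly `d - p`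
of which are degenerate (single points). -/
def IsPBoxIn (p d : ℕ) (s : Set (Fin d → ℝ)) : Prop :=
  ∃ lo hi : Fin d → ℝ, (∀ i, lo i ≤ hi i) ∧
    {i : Fin d | lo i = hi i}.ncard = d - p ∧
    s = {x | ∀ i, x i ∈ Set.Icc (lo i) (hi i)}

/-- A graph is an interval graph if it is the intersection graph of a family of
closed real intervals. -/
def IsIntervalGraph {V : Type*} (G : SimpleGraph V) : Prop :=
  ∃ a b : V → ℝ, (∀ v, a v ≤ b v) ∧
    ∀ u v : V, u ≠ v →
      (G.Adj u v ↔ (Set.Icc (a u) (b u) ∩ Set.Icc (a v) (b v)).Nonempty)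

/-- `G` is the intersection graph of a family of `p`-boxes in `ℝ^d`. -/
def RealizableAsPBoxes {V : Type*} (p d : ℕ) (G : SimpleGraph V) : Prop :=
  ∃ B : V → Set (Fin d → ℝ), (∀ v, IsPBoxIn p d (B v)) ∧
    ∀ u v : V, u ≠ v → (G.Adj u v ↔ (B u ∩ B v).Nonempty)

/-- `G` is the intersection graph of a family of (full) axis-parallel boxes in `ℝ^d`. -/
def RealizableAsBoxes {V : Type*} (d : ℕ) (G : SimpleGraph V) : Prop :=
  ∃ B : V → Set (Fin d → ℝ), (∀ v, IsBoxIn d (B v)) ∧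
    ∀ u v : V, u ≠ v → (G.Adj u v ↔ (B u ∩ B v).Nonempty)

/-- The intersection graph of a family of sets in `ℝ^d`. -/
def intersectionGraph {ι : Type*} {d : ℕ} (B : ι → Set (Fin d → ℝ)) : SimpleGraph ι :=
  SimpleGraph.fromRel fun i j => (B i ∩ B j).Nonempty

/-- The family `B` can be pierced by at most `n` points. -/
def Pierceable {ι : Type*} {d : ℕ} (B : ι → Set (Fin d → ℝ)) (n : ℕ) : Prop :=
  ∃ P : Finset (Fin d → ℝ), P.card ≤ n ∧ ∀ i, ∃ p ∈ P, p ∈ B i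

/-- The subfamily of `B` indexed by `S` can be pierced by at most `n` points. -/
def PierceableOn {ι : Type*} {d : ℕ} (B : ι → Set (Fin d → ℝ)) (S : Finset ι) (n : ℕ) : Prop :=
  ∃ P : Finset (Fin d → ℝ), P.card ≤ n ∧ ∀ i ∈ S, ∃ p ∈ P, p ∈ B i

/-- The cycle graph on `s` vertices, with vertex set `ZMod s`. -/
def cyc (s : ℕ) : SimpleGraph (ZMod s) := SimpleGraph.fromRel fun i j => j = i + 1

/-- The boxicity of a graph, as an extended natural number. -/
noncomputable def boxicity {V : Type*} (G : SimpleGraph V) : ℕ∞ :=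
  sInf {n : ℕ∞ | ∃ k : ℕ, n = k ∧ RealizableAsBoxes k G}

/-- The `p`-boxicity of a graph: the least `d ≥ p` such that `G` is realizable as
`p`-boxes in `ℝ^d` (possibly `∞`). -/
noncomputable def pboxicity {V : Type*} (p : ℕ) (G : SimpleGraph V) : ℕ∞ :=
  sInf {n : ℕ∞ | ∃ k : ℕ, n = k ∧ p ≤ k ∧ RealizableAsPBoxes p k G}


private lemma crossContr {l1 h1 l2 h2 m1 k1 m2 k2 : ℝ}
    (hI : h1 < l2 ∨ h2 < l1) (hJ : k1 < m2 ∨ k2 < m1)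
    (c11 : l1 ≤ k1 ∧ m1 ≤ h1) (c12 : l1 ≤ k2 ∧ m2 ≤ h1)
    (c21 : l2 ≤ k1 ∧ m1 ≤ h2) (c22 : l2 ≤ k2 ∧ m2 ≤ h2) : False := by
  rcases hI with h | h <;> rcases hJ with g | g <;>
    linarith [c11.1, c11.2, c12.1, c12.2, c21.1, c21.2, c22.1, c22.2]

private lemma mycard1 {α : Type*} (S : Finset α) (a : α) (h : ∀ x ∈ S, x = a) :
    S.card ≤ 1 :=
  Finset.card_le_one.mpr fun x hx y hy => (h x hx).trans (h y hy).symm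

private lemma mycard2 {α : Type*} [DecidableEq α] (S : Finset α) (a b : α)
    (h : ∀ x ∈ S, x = a ∨ x = b) : S.card ≤ 2 := by
  have hsub : S ⊆ {a, b} := fun x hx => by rcases h x hx with h' | h' <;> simp [h']
  have := Finset.card_le_card hsub
  have h2 : ({a, b} : Finset α).card ≤ 2 :=
    (Finset.card_insert_le _ _).trans (by simp)
  omega

private lemma mycard3 {α : Type*} [DecidableEq α] (S : Finset α) (a b c : α)
    (h : ∀ x ∈ S, x = a ∨ x = b ∨ x = c) : S.card ≤ 3 := by
  have hsub : S ⊆ {a, b, c} := fun x hx => by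
    rcases h x hx with h' | h' | h' <;> simp [h']
  have := Finset.card_le_card hsub
  have h2 : ({b, c} : Finset α).card ≤ 2 := (Finset.card_insert_le _ _).trans (by simp)
  have h3 : ({a, b, c} : Finset α).card ≤ 3 := (Finset.card_insert_le _ _).trans (by omega)
  omega

private lemma mycard4 {α : Type*} [DecidableEq α] (S : Finset α) (a b c e : α)
    (h : ∀ x ∈ S, x = a ∨ x = b ∨ x = c ∨ x = e) : S.card ≤ 4 := by
  have hsub : S ⊆ {a, b, c, e} := fun x hx => by
    rcases h x hx with h' | h' | h' | h' <;> simp [h']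
  have := Finset.card_le_card hsub
  have h1 : ({c, e} : Finset α).card ≤ 2 := (Finset.card_insert_le _ _).trans (by simp)
  have h2 : ({b, c, e} : Finset α).card ≤ 3 := (Finset.card_insert_le _ _).trans (by omega)
  have h3 : ({a, b, c, e} : Finset α).card ≤ 4 := (Finset.card_insert_le _ _).trans (by omega)
  omega

/-- for `p ≥ 3`, `d > p`, and `s ≥ 3p+1` (`p` even) or `s ≥ 3p+2`
(`p` odd), the complement of `C_s` is not realizable as `p`-boxes in `ℝ^d`. -/
theorem compl_cycle_not_realizable_p_boxes (p d s : ℕ) (hp : 3 ≤ p) (hd : p < d)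
    (hs : (Even p ∧ 3 * p + 1 ≤ s) ∨ (Odd p ∧ 3 * p + 2 ≤ s)) :
    ¬ RealizableAsPBoxes p d (cyc s)ᶜ := by
  classical
  rintro ⟨B, hB, hadj⟩
  choose lo hi hlh hnc hBeq using hB
  have hs10 : 10 ≤ s := by
    rcases hs with ⟨⟨m, hm⟩, h⟩ | ⟨-, h⟩ <;> omega
  haveI : NeZero s := ⟨by omega⟩
  -- small cancellation facts in ZMod s
  have zfa : ∀ (x : ZMod s) (a b : ℕ), a < 10 → b < 10 → a ≠ b →
      x + (a : ZMod s) ≠ x + (b : ZMod s) := by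
    intro x a b ha hb hab h
    have h' : ((a : ℕ) : ZMod s) = ((b : ℕ) : ZMod s) := add_left_cancel h
    have h2 := congrArg ZMod.val h'
    rw [ZMod.val_cast_of_lt (by omega), ZMod.val_cast_of_lt (by omega)] at h2
    exact hab h2
  -- intersecting pairs
  have h_inter : ∀ u v : ZMod s, u ≠ v → v ≠ u + 1 → u ≠ v + 1 →
      ∀ i, lo u i ≤ hi v i ∧ lo v i ≤ hi u i := by
    intro u v h1 h2 h3 i
    have hAdj : (cyc s)ᶜ.Adj u v := by
      rw [SimpleGraph.compl_adj]
      refine ⟨h1, ?_⟩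
      rw [cyc, SimpleGraph.fromRel_adj]
      rintro ⟨-, h | h⟩
      · exact h2 h
      · exact h3 h
    obtain ⟨x, hxu, hxv⟩ := (hadj u v h1).mp hAdj
    rw [hBeq u] at hxu
    rw [hBeq v] at hxv
    have hu := hxu i
    have hv := hxv i
    simp only [Set.mem_Icc] at hu hv
    exact ⟨hu.1.trans hv.2, hv.1.trans hu.2⟩
  -- each cycle edge is separated in some coordinate
  have h_sepEdge : ∀ v : ZMod s, ∃ i,
      hi v i < lo (v + 1) i ∨ hi (v + 1) i < lo v i := by
    intro v
    have hvv : v ≠ v + 1 := by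
      intro h
      exact zfa v 0 1 (by omega) (by omega) (by omega) (by push_cast; linear_combination h)
    have hnotadj : ¬ (cyc s)ᶜ.Adj v (v + 1) := by
      rw [SimpleGraph.compl_adj]
      rintro ⟨h1, h2⟩
      exact h2 (by rw [cyc, SimpleGraph.fromRel_adj]; exact ⟨h1, Or.inl rfl⟩)
    have hempty : ¬ (B v ∩ B (v + 1)).Nonempty := fun h =>
      hnotadj ((hadj v (v + 1) hvv).mpr h)
    by_contra hc
    push_neg at hc
    apply hempty
    refine ⟨fun i => max (lo v i) (lo (v + 1) i), ?_, ?_⟩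
    · rw [hBeq]
      intro i
      exact ⟨le_max_left _ _, max_le (hlh v i) (hc i).1⟩
    · rw [hBeq]
      intro i
      exact ⟨le_max_right _ _, max_le (hc i).2 (hlh (v + 1) i)⟩
  -- window lemma for two separated edges
  have hwin : ∀ (i : Fin d) (v w : ZMod s),
      (hi v i < lo (v + 1) i ∨ hi (v + 1) i < lo v i) →
      (hi w i < lo (w + 1) i ∨ hi (w + 1) i < lo w i) →
      (w = v ∨ w = v + 1 ∨ w = v + 2 ∨ v = w + 1 ∨ v = w + 2) := by
    intro i v w hv hw
    by_contra hc
    push_neg at hc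
    obtain ⟨n1, n2, n3, n4, n5⟩ := hc
    have c11 := h_inter v w (fun h => n1 h.symm) n2 n4 i
    have c12 := h_inter v (w + 1) n4 (fun h => n1 (by linear_combination h))
      (fun h => n5 (by linear_combination h)) i
    have c21 := h_inter (v + 1) w (fun h => n2 h.symm)
      (fun h => n3 (by linear_combination h)) (fun h => n1 (by linear_combination -h)) i
    have c22 := h_inter (v + 1) (w + 1) (fun h => n1 (by linear_combination -h))
      (fun h => n2 (by linear_combination h)) (fun h => n4 (by linear_combination h)) i
    exact crossContr hv hw c11 c12 c21 c22
  -- window lemma for a separated edge and a degenerate vertex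
  have hAFwin : ∀ (i : Fin d) (x u : ZMod s),
      (hi x i < lo (x + 1) i ∨ hi (x + 1) i < lo x i) →
      lo u i = hi u i →
      (u = x ∨ u = x + 1 ∨ u = x + 2 ∨ x = u + 1) := by
    intro i x u hsep hdeg
    by_contra hc
    push_neg at hc
    obtain ⟨n1, n2, n3, n4⟩ := hc
    have c1 := h_inter u x n1 n4 n2 i
    have c2 := h_inter u (x + 1) n2 (fun h => n1 (by linear_combination -h))
      (fun h => n3 (by linear_combination h)) i
    rcases hsep with h | h
    · have : lo u i ≤ hi x i := c1.1
      have : lo (x + 1) i ≤ lo u i := by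
        have := c2.2
        linarith [hdeg]
      linarith [c1.1, hdeg]
    · have := c2.1
      have := c1.2
      linarith [hdeg]
  -- the finite set machinery
  set SepF : Fin d → Finset (ZMod s) :=
    fun i => Finset.univ.filter
      (fun v => hi v i < lo (v + 1) i ∨ hi (v + 1) i < lo v i) with hSepF
  set AF : Fin d → Finset (ZMod s) :=
    fun i => Finset.univ.filter (fun u => lo u i = hi u i) with hAF
  set coords : Finset (Fin d) :=
    Finset.univ.filter (fun i => (SepF i).Nonempty) with hcoords
  have hmemS : ∀ (i : Fin d) (w : ZMod s), w ∈ SepF i ↔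
      (hi w i < lo (w + 1) i ∨ hi (w + 1) i < lo w i) := by
    intro i w
    rw [hSepF]
    simp
  have hmemA : ∀ (i : Fin d) (u : ZMod s), u ∈ AF i ↔ lo u i = hi u i := by
    intro i u
    rw [hAF]
    simp
  -- the per coordinate bound
  have hpercoord : ∀ i ∈ coords, (SepF i).card ≤ 3 ∧ (SepF i).card + (AF i).card ≤ 5 := by
    intro i hic
    have hne : (SepF i).Nonempty := by
      rw [hcoords] at hic
      simpa using hic
    obtain ⟨v, hv⟩ := hne
    have hv' := (hmemS i v).mp hv
    -- main run-based bound
    have hrun : ∀ a : ZMod s, a ∈ SepF i → (∀ w ∈ SepF i, w = a ∨ w = a + 1 ∨ w = a + 2) →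
        (SepF i).card ≤ 3 ∧ (SepF i).card + (AF i).card ≤ 5 := by
      intro a haS hsub
      have haS' := (hmemS i a).mp haS
      have hS3 : (SepF i).card ≤ 3 := mycard3 _ _ _ _ hsub
      refine ⟨hS3, ?_⟩
      by_cases h2 : a + 2 ∈ SepF i
      · -- full run : degenerate vertices confined to {a+1, a+2}
        have h2' := (hmemS i (a + 2)).mp h2
        have hA : ∀ u ∈ AF i, u = a + 1 ∨ u = a + 2 := by
          intro u hu
          have hdeg := (hmemA i u).mp hu
          have w1 := hAFwin i a u haS' hdeg
          have w2 := hAFwin i (a + 2) u h2' hdeg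
          rcases w1 with h | h | h | h
          · exfalso
            rcases w2 with g | g | g | g
            · exact zfa a 0 2 (by omega) (by omega) (by omega)
                (by push_cast; linear_combination g - h)
            · exact zfa a 0 3 (by omega) (by omega) (by omega)
                (by push_cast; linear_combination g - h)
            · exact zfa a 0 4 (by omega) (by omega) (by omega)
                (by push_cast; linear_combination g - h)
            · exact zfa a 2 1 (by omega) (by omega) (by omega)
                (by push_cast; linear_combination g + h)
          · exact Or.inl h
          · exact Or.inr h
          · exfalso
            rcases w2 with g | g | g | g
            · exact zfa a 0 3 (by omega) (by omega) (by omega)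
                (by push_cast; linear_combination h + g)
            · exact zfa a 0 4 (by omega) (by omega) (by omega)
                (by push_cast; linear_combination h + g)
            · exact zfa a 0 5 (by omega) (by omega) (by omega)
                (by push_cast; linear_combination h + g)
            · exact zfa a 2 0 (by omega) (by omega) (by omega)
                (by push_cast; linear_combination g - h)
        have hA2 : (AF i).card ≤ 2 := mycard2 _ _ _ hA
        omega
      · by_cases h1 : a + 1 ∈ SepF i
        · have h1' := (hmemS i (a + 1)).mp h1
          have hS2 : (SepF i).card ≤ 2 := by
            refine mycard2 _ a (a + 1) fun w hw => ?_
            rcases hsub w hw with h | h | h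
            · exact Or.inl h
            · exact Or.inr h
            · exact absurd (h ▸ hw) h2
          have hA : ∀ u ∈ AF i, u = a ∨ u = a + 1 ∨ u = a + 2 := by
            intro u hu
            have hdeg := (hmemA i u).mp hu
            have w1 := hAFwin i a u haS' hdeg
            have w2 := hAFwin i (a + 1) u h1' hdeg
            rcases w1 with h | h | h | h
            · exact Or.inl h
            · exact Or.inr (Or.inl h)
            · exact Or.inr (Or.inr h)
            · rcases w2 with g | g | g | g
              · exfalso
                exact zfa a 0 2 (by omega) (by omega) (by omega)
                  (by push_cast; linear_combination h + g)
              · exfalso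
                exact zfa a 0 3 (by omega) (by omega) (by omega)
                  (by push_cast; linear_combination h + g)
              · exfalso
                exact zfa a 0 4 (by omega) (by omega) (by omega)
                  (by push_cast; linear_combination h + g)
              · exact Or.inl (by linear_combination -g)
          have hA3 : (AF i).card ≤ 3 := mycard3 _ _ _ _ hA
          omega
        · have hS1 : (SepF i).card ≤ 1 := by
            refine mycard1 _ a fun w hw => ?_
            rcases hsub w hw with h | h | h
            · exact h
            · exact absurd (h ▸ hw) h1
            · exact absurd (h ▸ hw) h2
          have hA : ∀ u ∈ AF i, u = a - 1 ∨ u = a ∨ u = a + 1 ∨ u = a + 2 := by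
            intro u hu
            have hdeg := (hmemA i u).mp hu
            have w1 := hAFwin i a u haS' hdeg
            rcases w1 with h | h | h | h
            · exact Or.inr (Or.inl h)
            · exact Or.inr (Or.inr (Or.inl h))
            · exact Or.inr (Or.inr (Or.inr h))
            · exact Or.inl (by linear_combination - h)
          have hA4 : (AF i).card ≤ 4 := mycard4 _ _ _ _ _ hA
          omega
    -- find the left end of the run
    by_cases hA2 : ∃ w ∈ SepF i, v = w + 2
    · obtain ⟨w, hwS, hv2⟩ := hA2
      have hwS' := (hmemS i w).mp hwS
      refine hrun w hwS fun w' hw' => ?_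
      have hw's := (hmemS i w').mp hw'
      rcases hwin i w w' hwS' hw's with h | h | h | h | h
      · exact Or.inl h
      · exact Or.inr (Or.inl h)
      · exact Or.inr (Or.inr h)
      · -- w = w' + 1, so v = w' + 3
        exfalso
        have hv3 : v = w' + 3 := by rw [hv2, h]; ring
        rcases hwin i v w' hv' hw's with g | g | g | g | g
        · exact zfa w' 0 3 (by omega) (by omega) (by omega)
            (by push_cast; linear_combination g + hv3)
        · exact zfa w' 0 4 (by omega) (by omega) (by omega)
            (by push_cast; linear_combination g + hv3)
        · exact zfa w' 0 5 (by omega) (by omega) (by omega)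
            (by push_cast; linear_combination g + hv3)
        · exact zfa w' 3 1 (by omega) (by omega) (by omega)
            (by push_cast; linear_combination g - hv3)
        · exact zfa w' 3 2 (by omega) (by omega) (by omega)
            (by push_cast; linear_combination g - hv3)
      · -- w = w' + 2, so v = w' + 4
        exfalso
        have hv4 : v = w' + 4 := by rw [hv2, h]; ring
        rcases hwin i v w' hv' hw's with g | g | g | g | g
        · exact zfa w' 0 4 (by omega) (by omega) (by omega)
            (by push_cast; linear_combination g + hv4)
        · exact zfa w' 0 5 (by omega) (by omega) (by omega)
            (by push_cast; linear_combination g + hv4)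
        · exact zfa w' 0 6 (by omega) (by omega) (by omega)
            (by push_cast; linear_combination g + hv4)
        · exact zfa w' 4 1 (by omega) (by omega) (by omega)
            (by push_cast; linear_combination g - hv4)
        · exact zfa w' 4 2 (by omega) (by omega) (by omega)
            (by push_cast; linear_combination g - hv4)
    · by_cases hB2 : ∃ w ∈ SepF i, v = w + 1
      · obtain ⟨w, hwS, hv1⟩ := hB2
        have hwS' := (hmemS i w).mp hwS
        refine hrun w hwS fun w' hw' => ?_
        have hw's := (hmemS i w').mp hw'
        rcases hwin i w w' hwS' hw's with h | h | h | h | h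
        · exact Or.inl h
        · exact Or.inr (Or.inl h)
        · exact Or.inr (Or.inr h)
        · -- w = w' + 1, so v = w' + 2 : contradicts hA2
          exact absurd ⟨w', hw', by rw [hv1, h]; ring⟩ hA2
        · -- w = w' + 2, so v = w' + 3
          exfalso
          have hv3 : v = w' + 3 := by rw [hv1, h]; ring
          rcases hwin i v w' hv' hw's with g | g | g | g | g
          · exact zfa w' 0 3 (by omega) (by omega) (by omega)
              (by push_cast; linear_combination g + hv3)
          · exact zfa w' 0 4 (by omega) (by omega) (by omega)
              (by push_cast; linear_combination g + hv3)
          · exact zfa w' 0 5 (by omega) (by omega) (by omega)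
              (by push_cast; linear_combination g + hv3)
          · exact zfa w' 3 1 (by omega) (by omega) (by omega)
              (by push_cast; linear_combination g - hv3)
          · exact absurd ⟨w', hw', g⟩ hA2
      · refine hrun v hv fun w' hw' => ?_
        have hw's := (hmemS i w').mp hw'
        rcases hwin i v w' hv' hw's with h | h | h | h | h
        · exact Or.inl h
        · exact Or.inr (Or.inl h)
        · exact Or.inr (Or.inr h)
        · exact absurd ⟨w', hw', h⟩ hB2
        · exact absurd ⟨w', hw', h⟩ hA2
  -- counting
  set N := coords.card with hN
  have hcover : ∀ v : ZMod s, ∃ i ∈ coords, v ∈ SepF i := by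
    intro v
    obtain ⟨i, hsep⟩ := h_sepEdge v
    have hvS : v ∈ SepF i := (hmemS i v).mpr hsep
    refine ⟨i, ?_, hvS⟩
    rw [hcoords]
    simp only [Finset.mem_filter, Finset.mem_univ, true_and]
    exact ⟨v, hvS⟩
  have hG1 : s ≤ ∑ i ∈ coords, (SepF i).card := by
    have h1 : (Finset.univ : Finset (ZMod s)) ⊆ coords.biUnion SepF := by
      intro v _
      rw [Finset.mem_biUnion]
      exact hcover v
    calc s = (Finset.univ : Finset (ZMod s)).card := by
              rw [Finset.card_univ, ZMod.card]
      _ ≤ (coords.biUnion SepF).card := Finset.card_le_card h1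
      _ ≤ ∑ i ∈ coords, (SepF i).card := Finset.card_biUnion_le
  have hG1' : ∑ i ∈ coords, (SepF i).card ≤ 3 * N := by
    calc ∑ i ∈ coords, (SepF i).card ≤ ∑ _i ∈ coords, 3 :=
          Finset.sum_le_sum fun i hi => (hpercoord i hi).1
      _ = 3 * N := by rw [Finset.sum_const, smul_eq_mul, mul_comm]
  have hsum5 : (∑ i ∈ coords, (SepF i).card) + (∑ i ∈ coords, (AF i).card) ≤ 5 * N := by
    calc (∑ i ∈ coords, (SepF i).card) + (∑ i ∈ coords, (AF i).card)
        = ∑ i ∈ coords, ((SepF i).card + (AF i).card) := (Finset.sum_add_distrib).symm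
      _ ≤ ∑ _i ∈ coords, 5 := Finset.sum_le_sum fun i hi => (hpercoord i hi).2
      _ = 5 * N := by rw [Finset.sum_const, smul_eq_mul, mul_comm]
  have hfiber : ∀ u : ZMod s, N ≤ p + (coords.filter (fun i => lo u i = hi u i)).card := by
    intro u
    have h1 : (Finset.univ.filter (fun i : Fin d => lo u i = hi u i)).card = d - p := by
      rw [← hnc u, Set.ncard_eq_toFinset_card']
      congr 1
      ext j
      simp
    have h2 := Finset.card_filter_add_card_filter_not
      (s := (Finset.univ : Finset (Fin d))) (p := fun i => lo u i = hi u i)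
    rw [Finset.card_univ, Fintype.card_fin] at h2
    have h3 : coords.filter (fun i => ¬ lo u i = hi u i) ⊆
        Finset.univ.filter (fun i : Fin d => ¬ lo u i = hi u i) :=
      Finset.filter_subset_filter _ (Finset.subset_univ _)
    have h4 := Finset.card_filter_add_card_filter_not
      (s := coords) (p := fun i => lo u i = hi u i)
    have h5 := Finset.card_le_card h3
    omega
  have hdouble : ∑ i ∈ coords, (AF i).card =
      ∑ u : ZMod s, (coords.filter (fun i => lo u i = hi u i)).card := by
    calc ∑ i ∈ coords, (AF i).card
        = ∑ i ∈ coords, ∑ u : ZMod s, (if lo u i = hi u i then 1 else 0) := by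
          refine Finset.sum_congr rfl fun i _ => ?_
          rw [hAF]
          rw [Finset.card_filter]
      _ = ∑ u : ZMod s, ∑ i ∈ coords, (if lo u i = hi u i then 1 else 0) :=
          Finset.sum_comm
      _ = ∑ u : ZMod s, (coords.filter (fun i => lo u i = hi u i)).card := by
          refine Finset.sum_congr rfl fun u _ => ?_
          rw [Finset.card_filter]
  have hNsum : s * N ≤ s * p + ∑ i ∈ coords, (AF i).card := by
    calc s * N = ∑ _u : ZMod s, N := by
          rw [Finset.sum_const, Finset.card_univ, ZMod.card, smul_eq_mul]
      _ ≤ ∑ u : ZMod s, (p + (coords.filter (fun i => lo u i = hi u i)).card) :=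
          Finset.sum_le_sum fun u _ => hfiber u
      _ = s * p + ∑ u : ZMod s, (coords.filter (fun i => lo u i = hi u i)).card := by
          rw [Finset.sum_add_distrib, Finset.sum_const, Finset.card_univ, ZMod.card,
            smul_eq_mul]
      _ = s * p + ∑ i ∈ coords, (AF i).card := by rw [hdouble]
  have key : s * N + s ≤ s * p + 5 * N := by
    have := hsum5
    have := hG1
    have := hNsum
    linarith
  have h3N : s ≤ 3 * N := hG1.trans hG1'
  -- final arithmetic
  have hNp : p + 1 ≤ N := by
    rcases hs with ⟨-, hle⟩ | ⟨-, hle⟩ <;> omega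
  obtain ⟨k, hk⟩ : ∃ k, N = p + 1 + k := ⟨N - (p + 1), by omega⟩
  have hsk : 10 * k ≤ s * k := Nat.mul_le_mul_right k (by omega)
  have h2s : 5 * p + 5 < 2 * s := by
    rcases hs with ⟨⟨m, hm⟩, hle⟩ | ⟨-, hle⟩ <;> omega
  have hexp : s * N = s * p + s * k + s := by rw [hk]; ring
  have h5N : 5 * N = 5 * p + 5 + 5 * k := by omega
  linarith [key, hexp, hsk, h2s, h5N]
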